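/- For k ≥ 0 and ℓ ≥ 0, the identity x ℙ_{k−2} ⊕ curl(ℙ_{k+ℓ}) = [ℙ_{k−1}]² ⊕ curl(ℙ_{k+ℓ} \ ℙ_k) holds as subspaces of polynomial vector fields; that is, the space 𝒫_{k,ℓ} defined as [ℙ_{k−1}]² + curl(ℙ_{k+ℓ}) equals x ℙ_{k−2} + curl(ℙ_{k+ℓ}). -/
import Mathlib


open MvPolynomial

/-- The space `x ℙ_{k−2}` of two-variable polynomial vector fields
`(x₁ q, x₂ q)` with `deg q ≤ k − 2` (empty for `k < 2`). -/
def xPolySet (k : ℕ) : Set (MvPolynomial (Fin 2) ℝ × MvPolynomial (Fin 2) ℝ) :=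
  {F | ∃ q : MvPolynomial (Fin 2) ℝ, q.totalDegree + 2 ≤ k ∧ F = (X 0 * q, X 1 * q)}

/-- The space `[ℙ_{k−1}]²` of polynomial vector fields with components of
degree ≤ k − 1 (empty for `k = 0`). -/
def polyVecSet (k : ℕ) : Set (MvPolynomial (Fin 2) ℝ × MvPolynomial (Fin 2) ℝ) :=
  {F | F.1.totalDegree + 1 ≤ k ∧ F.2.totalDegree + 1 ≤ k}

/-- The space `curl ℙ_m = {(∂p/∂x₂, −∂p/∂x₁) : deg p ≤ m}`. -/
def curlPolySet (m : ℕ) : Set (MvPolynomial (Fin 2) ℝ × MvPolynomial (Fin 2) ℝ) :=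
  {F | ∃ p : MvPolynomial (Fin 2) ℝ, p.totalDegree ≤ m ∧
    F = (pderiv (1 : Fin 2) p, -(pderiv (0 : Fin 2) p))}

namespace PklAux

abbrev P := MvPolynomial (Fin 2) ℝ

lemma deg_pow_mul (a b : ℕ) : ((X 0:P)^a * X 1^b).totalDegree ≤ a + b := by
  calc ((X 0:P)^a * X 1^b).totalDegree ≤ ((X 0:P)^a).totalDegree + ((X 1:P)^b).totalDegree :=
        totalDegree_mul _ _
    _ ≤ a + b := by simp [totalDegree_X_pow]

variable (k ℓ : ℕ)

local notation "S" => Submodule.span ℝ (xPolySet k ∪ curlPolySet (k + ℓ))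

lemma curl_mem (p : P) (h : p.totalDegree ≤ k + ℓ) :
    ((pderiv (1:Fin 2) p, -(pderiv (0:Fin 2) p)) : P × P) ∈ S :=
  Submodule.subset_span (Or.inr ⟨p, h, rfl⟩)

lemma x_mem (q : P) (h : q.totalDegree + 2 ≤ k) :
    ((X 0 * q, X 1 * q) : P × P) ∈ S :=
  Submodule.subset_span (Or.inl ⟨q, h, rfl⟩)

lemma smul_mem_cancel {F : P × P} {n : ℕ} (h : ((n+1 : ℕ) : ℝ) • F ∈ S) : F ∈ S := by
  have : F = (((n+1:ℕ):ℝ))⁻¹ • (((n+1:ℕ):ℝ) • F) := by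
    rw [smul_smul, inv_mul_cancel₀ (by positivity), one_smul]
  rw [this]
  exact Submodule.smul_mem _ _ h

lemma mono_fst_mem (a b : ℕ) (hab : a + b + 1 ≤ k) :
    (((X 0:P)^a * X 1^b, (0:P)) : P × P) ∈ S := by
  cases a with
  | zero =>
    apply smul_mem_cancel k ℓ (n := b)
    have hp : ((b+1:ℕ):ℝ) • (((X 0:P)^0 * X 1^b, (0:P)) : P × P)
        = (pderiv (1:Fin 2) ((X 1:P)^(b+1)), -(pderiv (0:Fin 2) ((X 1:P)^(b+1)))) := by
      rw [Prod.smul_mk, Prod.mk.injEq]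
      constructor
      · simp [pderiv_pow, pderiv_X, smul_eq_C_mul, C_add, C_1]
      · simp [pderiv_pow, pderiv_X]
    rw [hp]
    apply curl_mem
    calc ((X 1:P)^(b+1)).totalDegree ≤ 0 + (b+1) := by simp [totalDegree_X_pow]
      _ ≤ k + ℓ := by omega
  | succ a =>
    apply smul_mem_cancel k ℓ (n := a + b + 1)
    have hp : ((a+b+1+1:ℕ):ℝ) • (((X 0:P)^(a+1) * X 1^b, (0:P)) : P × P)
        = (pderiv (1:Fin 2) ((X 0:P)^(a+1) * X 1^(b+1)),
            -(pderiv (0:Fin 2) ((X 0:P)^(a+1) * X 1^(b+1))))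
          + ((a+1:ℕ):ℝ) • ((X 0 * ((X 0:P)^a * X 1^b), X 1 * ((X 0:P)^a * X 1^b)) : P × P) := by
      rw [Prod.smul_mk, Prod.smul_mk, Prod.mk_add_mk, Prod.mk.injEq]
      constructor
      · simp [pderiv_mul, pderiv_pow, pderiv_X, smul_eq_C_mul, C_add, C_1]; ring
      · simp [pderiv_mul, pderiv_pow, pderiv_X, smul_eq_C_mul, C_add, C_1]; ring
    rw [hp]
    refine Submodule.add_mem _ ?_ (Submodule.smul_mem _ _ ?_)
    · apply curl_mem
      exact le_trans (deg_pow_mul _ _) (by omega)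
    · apply x_mem
      have := deg_pow_mul a b
      omega

lemma mono_snd_mem (a b : ℕ) (hab : a + b + 1 ≤ k) :
    (((0:P), (X 0:P)^a * X 1^b) : P × P) ∈ S := by
  cases b with
  | zero =>
    apply smul_mem_cancel k ℓ (n := a)
    have hp : ((a+1:ℕ):ℝ) • (((0:P), (X 0:P)^a * X 1^0) : P × P)
        = (pderiv (1:Fin 2) (-(X 0:P)^(a+1)), -(pderiv (0:Fin 2) (-(X 0:P)^(a+1)))) := by
      rw [Prod.smul_mk, Prod.mk.injEq]
      constructor
      · simp [pderiv_pow, pderiv_X]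
      · simp [pderiv_pow, pderiv_X, smul_eq_C_mul, C_add, C_1]
    rw [hp]
    apply curl_mem
    calc ((-(X 0:P)^(a+1))).totalDegree = ((X 0:P)^(a+1)).totalDegree := totalDegree_neg _
      _ ≤ k + ℓ := by rw [totalDegree_X_pow]; omega
  | succ b =>
    apply smul_mem_cancel k ℓ (n := a + b + 1)
    have hp : ((a+b+1+1:ℕ):ℝ) • (((0:P), (X 0:P)^a * X 1^(b+1)) : P × P)
        = (pderiv (1:Fin 2) (-((X 0:P)^(a+1) * X 1^(b+1))),
            -(pderiv (0:Fin 2) (-((X 0:P)^(a+1) * X 1^(b+1)))))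
          + ((b+1:ℕ):ℝ) • ((X 0 * ((X 0:P)^a * X 1^b), X 1 * ((X 0:P)^a * X 1^b)) : P × P) := by
      rw [Prod.smul_mk, Prod.smul_mk, Prod.mk_add_mk, Prod.mk.injEq]
      constructor
      · simp [pderiv_mul, pderiv_pow, pderiv_X, smul_eq_C_mul, C_add, C_1]; ring
      · simp [pderiv_mul, pderiv_pow, pderiv_X, smul_eq_C_mul, C_add, C_1]; ring
    rw [hp]
    refine Submodule.add_mem _ ?_ (Submodule.smul_mem _ _ ?_)
    · apply curl_mem
      calc (-((X 0:P)^(a+1) * X 1^(b+1))).totalDegree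
          = ((X 0:P)^(a+1) * X 1^(b+1)).totalDegree := totalDegree_neg _
        _ ≤ k + ℓ := le_trans (deg_pow_mul _ _) (by omega)
    · apply x_mem
      have := deg_pow_mul a b
      omega

lemma monomial_eq_pow (s : Fin 2 →₀ ℕ) (c : ℝ) :
    (monomial s c : P) = c • ((X 0:P)^(s 0) * X 1^(s 1)) := by
  have hs : s = Finsupp.single 0 (s 0) + Finsupp.single 1 (s 1) := by
    ext i
    fin_cases i <;> simp [Finsupp.single_apply]
  rw [hs, X_pow_eq_monomial, X_pow_eq_monomial, monomial_mul, smul_monomial]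
  simp

lemma support_deg (f : P) (s : Fin 2 →₀ ℕ) (hs : s ∈ f.support) :
    s 0 + s 1 ≤ f.totalDegree := by
  have h := le_totalDegree hs
  have : (s.sum fun _ e => e) = s 0 + s 1 := by
    rw [Finsupp.sum_fintype _ _ (fun _ => rfl), Fin.sum_univ_two]
  omega

lemma fst_mem (f : P) (hf : f.totalDegree + 1 ≤ k) : ((f, (0:P)) : P × P) ∈ S := by
  have hrw : ((f, (0:P)) : P × P)
      = ∑ s ∈ f.support, ((monomial s (coeff s f) : P), (0:P)) := by
    rw [Prod.ext_iff]
    constructor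
    · rw [Prod.fst_sum]; exact f.as_sum
    · rw [Prod.snd_sum]; simp
  rw [hrw]
  refine Submodule.sum_mem _ fun s hs => ?_
  rw [monomial_eq_pow]
  have heq : (((coeff s f) • ((X 0:P)^(s 0) * X 1^(s 1)), (0:P)) : P × P)
      = (coeff s f) • (((X 0:P)^(s 0) * X 1^(s 1), (0:P)) : P × P) := by
    simp
  rw [heq]
  refine Submodule.smul_mem _ _ (mono_fst_mem k ℓ _ _ ?_)
  have := support_deg f s hs
  omega

lemma snd_mem (f : P) (hf : f.totalDegree + 1 ≤ k) : (((0:P), f) : P × P) ∈ S := by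
  have hrw : (((0:P), f) : P × P)
      = ∑ s ∈ f.support, ((0:P), (monomial s (coeff s f) : P)) := by
    rw [Prod.ext_iff]
    constructor
    · rw [Prod.fst_sum]; simp
    · rw [Prod.snd_sum]; exact f.as_sum
  rw [hrw]
  refine Submodule.sum_mem _ fun s hs => ?_
  rw [monomial_eq_pow]
  have heq : (((0:P), (coeff s f) • ((X 0:P)^(s 0) * X 1^(s 1))) : P × P)
      = (coeff s f) • (((0:P), (X 0:P)^(s 0) * X 1^(s 1)) : P × P) := by
    simp
  rw [heq]
  refine Submodule.smul_mem _ _ (mono_snd_mem k ℓ _ _ ?_)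
  have := support_deg f s hs
  omega

end PklAux

/-- For `k, ℓ ≥ 0`, the space `𝒫_{k,ℓ} = [ℙ_{k−1}]² + curl ℙ_{k+ℓ}` equals
`x ℙ_{k−2} + curl ℙ_{k+ℓ}` as subspaces of polynomial vector fields. -/
theorem Pkl_two_descriptions (k ℓ : ℕ) :
    Submodule.span ℝ (polyVecSet k ∪ curlPolySet (k + ℓ)) =
      Submodule.span ℝ (xPolySet k ∪ curlPolySet (k + ℓ)) := by
  apply le_antisymm
  · rw [Submodule.span_le]
    rintro F hF
    rcases hF with hF | hF
    · obtain ⟨h1, h2⟩ := hF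
      have : F = (F.1, (0:PklAux.P)) + ((0:PklAux.P), F.2) := by simp
      rw [this]
      exact Submodule.add_mem _ (PklAux.fst_mem k ℓ _ h1) (PklAux.snd_mem k ℓ _ h2)
    · exact Submodule.subset_span (Or.inr hF)
  · rw [Submodule.span_le]
    rintro F hF
    rcases hF with ⟨q, hq, rfl⟩ | hF
    · apply Submodule.subset_span
      left
      constructor
      · calc ((X 0 * q : PklAux.P)).totalDegree + 1
            ≤ ((X 0 : PklAux.P).totalDegree + q.totalDegree) + 1 := by
              have := totalDegree_mul (X 0 : PklAux.P) q; omega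
          _ ≤ k := by rw [totalDegree_X]; omega
      · calc ((X 1 * q : PklAux.P)).totalDegree + 1
            ≤ ((X 1 : PklAux.P).totalDegree + q.totalDegree) + 1 := by
              have := totalDegree_mul (X 1 : PklAux.P) q; omega
          _ ≤ k := by rw [totalDegree_X]; omega
    · exact Submodule.subset_span (Or.inr hF)
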